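/- If a finite simple graph G has a unique minimum ev-dominating set, then G has a unique minimum paired-dominating set. -/

import Mathlib

open SimpleGraph

variable {V : Type*}

/-- `D` is a dominating set of `G`: every vertex outside `D` has a neighbor in `D`. -/
def IsDomSet (G : SimpleGraph V) (D : Set V) : Prop :=
  ∀ v ∉ D, ∃ u ∈ D, G.Adj u v

/-- The edge `e` ev-dominates the vertex `v`: `e` is incident to `v` or to a neighbor of `v`. -/
def EvDom (G : SimpleGraph V) (e : Sym2 V) (v : V) : Prop :=
  v ∈ e ∨ ∃ u ∈ e, G.Adj u v

/-- `M` is an edge-vertex dominating set of `G`. -/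
def IsEvDomSet (G : SimpleGraph V) (M : Set (Sym2 V)) : Prop :=
  M ⊆ G.edgeSet ∧ ∀ v : V, ∃ e ∈ M, EvDom G e v

/-- `M` is a minimum edge-vertex dominating set of `G`. -/
def IsMinEvDomSet (G : SimpleGraph V) (M : Set (Sym2 V)) : Prop :=
  IsEvDomSet G M ∧ ∀ M' : Set (Sym2 V), IsEvDomSet G M' → M.ncard ≤ M'.ncard

/-- The edge-vertex domination number `γ_ev(G)`. -/
noncomputable def evNum (G : SimpleGraph V) : ℕ :=
  sInf {n | ∃ M : Set (Sym2 V), IsEvDomSet G M ∧ M.ncard = n}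

/-- The set of all endpoints of edges in `M`. -/
def edgeVerts (M : Set (Sym2 V)) : Set V := {v | ∃ e ∈ M, v ∈ e}

/-- `M` is a perfect matching of the induced subgraph `G[D]`: a set of edges of `G`
with all endpoints in `D`, such that every vertex of `D` lies in exactly one edge of `M`. -/
def IsPMOn (G : SimpleGraph V) (D : Set V) (M : Set (Sym2 V)) : Prop :=
  M ⊆ G.edgeSet ∧ (∀ e ∈ M, ∀ v ∈ e, v ∈ D) ∧ ∀ v ∈ D, ∃! e, e ∈ M ∧ v ∈ e

/-- `D` is a paired-dominating set of `G`. -/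
def IsPairedDomSet (G : SimpleGraph V) (D : Set V) : Prop :=
  IsDomSet G D ∧ ∃ M : Set (Sym2 V), IsPMOn G D M

/-- `D` is a minimum paired-dominating set of `G`. -/
def IsMinPairedDomSet (G : SimpleGraph V) (D : Set V) : Prop :=
  IsPairedDomSet G D ∧ ∀ D' : Set V, IsPairedDomSet G D' → D.ncard ≤ D'.ncard

/-- The paired-domination number `γ_pr(G)`. -/
noncomputable def prNum (G : SimpleGraph V) : ℕ :=
  sInf {n | ∃ D : Set V, IsPairedDomSet G D ∧ D.ncard = n}

/-- No two distinct edges of `M` share a vertex. -/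
def NoSharedVertex (M : Set (Sym2 V)) : Prop :=
  ∀ e ∈ M, ∀ f ∈ M, e ≠ f → ∀ v : V, v ∈ e → v ∉ f

/-- `G` has no isolated vertex. -/
def NoIsolated (G : SimpleGraph V) : Prop := ∀ v : V, ∃ u, G.Adj u v

/- ### Auxiliary lemmas -/

lemma edgeVerts_insert (e : Sym2 V) (M : Set (Sym2 V)) :
    edgeVerts (insert e M) = {v | v ∈ e} ∪ edgeVerts M := by
  ext v
  simp only [edgeVerts, Set.mem_insert_iff, Set.mem_union, Set.mem_setOf_eq]
  constructor
  · rintro ⟨f, (rfl | hf), hv⟩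
    · exact Or.inl hv
    · exact Or.inr ⟨f, hf, hv⟩
  · rintro (hv | ⟨f, hf, hv⟩)
    · exact ⟨e, Or.inl rfl, hv⟩
    · exact ⟨f, Or.inr hf, hv⟩

lemma ncard_edgeVerts [Fintype V] {G : SimpleGraph V} {M : Set (Sym2 V)}
    (hsub : M ⊆ G.edgeSet) (hns : NoSharedVertex M) :
    (edgeVerts M).ncard = 2 * M.ncard := by
  classical
  refine Set.Finite.induction_on (motive := fun M _ => M ⊆ G.edgeSet → NoSharedVertex M →
    (edgeVerts M).ncard = 2 * M.ncard) M (Set.toFinite M) ?_ ?_ hsub hns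
  · intro _ _
    simp [edgeVerts]
  · intro e M heM hMfin ih hsub' hns'
    have hsubM : M ⊆ G.edgeSet := fun f hf => hsub' (Set.mem_insert_of_mem _ hf)
    have hnsM : NoSharedVertex M := fun a ha b hb hab v hv =>
      hns' a (Set.mem_insert_of_mem _ ha) b (Set.mem_insert_of_mem _ hb) hab v hv
    have he : e ∈ G.edgeSet := hsub' (Set.mem_insert _ _)
    obtain ⟨a, b, rfl⟩ : ∃ a b, e = s(a, b) := by
      induction e using Sym2.ind with
      | _ x y => exact ⟨x, y, rfl⟩
    have hab : a ≠ b := (G.mem_edgeSet.mp he).ne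
    have hset : {v : V | v ∈ s(a, b)} = ({a, b} : Set V) := by
      ext v; simp [Sym2.mem_iff]
    have hdisj : Disjoint {v : V | v ∈ s(a, b)} (edgeVerts M) := by
      rw [Set.disjoint_left]
      rintro v hv ⟨f, hf, hvf⟩
      have hne : s(a, b) ≠ f := by rintro rfl; exact heM hf
      exact hns' s(a, b) (Set.mem_insert _ _) f (Set.mem_insert_of_mem _ hf) hne v hv hvf
    rw [edgeVerts_insert, Set.ncard_union_eq hdisj (Set.toFinite _) (Set.toFinite _),
      hset, Set.ncard_pair hab, ih hsubM hnsM,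
      Set.ncard_insert_of_notMem heM (Set.toFinite _)]
    ring

lemma matching_of_unique [Fintype V] {G : SimpleGraph V} {M : Set (Sym2 V)}
    (hmin : IsMinEvDomSet G M) (huniq : ∀ M', IsMinEvDomSet G M' → M' = M) :
    NoSharedVertex M := by
  intro e he f hf hef v hve hvf
  obtain ⟨a, rfl⟩ := Sym2.mem_iff_exists.mp hve
  obtain ⟨b, rfl⟩ := Sym2.mem_iff_exists.mp hvf
  have hva : G.Adj v a := G.mem_edgeSet.mp (hmin.1.1 he)
  have hvb : G.Adj v b := G.mem_edgeSet.mp (hmin.1.1 hf)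
  have hab : a ≠ b := by rintro rfl; exact hef rfl
  -- a vertex covered only near f is covered by e or by a new edge at b
  by_cases hw : ∃ w, G.Adj b w ∧ w ≠ v
  · obtain ⟨w, hbw, hwv⟩ := hw
    set f' : Sym2 V := s(b, w) with hf'
    have hf'e : f' ∈ G.edgeSet := G.mem_edgeSet.mpr hbw
    have hf'f : f' ≠ s(v, b) := by
      intro h
      rcases Sym2.eq_iff.mp h with ⟨h1, h2⟩ | ⟨h1, h2⟩
      · exact hvb.ne' h1
      · exact hwv h2
    set M₂ : Set (Sym2 V) := insert f' (M \ {s(v, b)}) with hM₂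
    have hcov : ∀ x, ∃ e' ∈ M₂, EvDom G e' x := by
      intro x
      obtain ⟨e'', he'', hcov''⟩ := hmin.1.2 x
      by_cases h : e'' = s(v, b)
      · subst h
        rcases hcov'' with hx | ⟨u, hu, hux⟩
        · rcases Sym2.mem_iff.mp hx with h' | h'
          · exact ⟨s(v, a), Set.mem_insert_of_mem _ ⟨he, hef⟩,
              Or.inl (by rw [h']; exact Sym2.mem_mk_left _ _)⟩
          · exact ⟨f', Set.mem_insert _ _, Or.inl (by rw [h']; exact Sym2.mem_mk_left _ _)⟩
        · rcases Sym2.mem_iff.mp hu with h' | h'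
          · exact ⟨s(v, a), Set.mem_insert_of_mem _ ⟨he, hef⟩,
              Or.inr ⟨v, Sym2.mem_mk_left _ _, by rw [← h']; exact hux⟩⟩
          · exact ⟨f', Set.mem_insert _ _,
              Or.inr ⟨b, Sym2.mem_mk_left _ _, by rw [← h']; exact hux⟩⟩
      · exact ⟨e'', Set.mem_insert_of_mem _ ⟨he'', h⟩, hcov''⟩
    have hM₂ev : IsEvDomSet G M₂ := by
      constructor
      · rintro g (rfl | ⟨hg, -⟩)
        · exact hf'e
        · exact hmin.1.1 hg
      · exact hcov
    have hM₂le : M₂.ncard ≤ M.ncard := by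
      by_cases hf'M : f' ∈ M
      · have : M₂.ncard ≤ (M \ {s(v, b)}).ncard + 1 := Set.ncard_insert_le _ _
        calc M₂.ncard ≤ (M \ {s(v, b)}).ncard + 1 := Set.ncard_insert_le _ _
          _ ≤ (M.ncard - 1) + 1 := by
              rw [Set.ncard_diff_singleton_of_mem hf]
          _ ≤ M.ncard := by
              have : 0 < M.ncard := (Set.ncard_pos (Set.toFinite _)).mpr ⟨_, hf⟩
              omega
      · have h2 := Set.ncard_exchange (s := M) (a := f') (b := s(v, b)) hf'M hf
        rw [← hM₂] at h2
        omega
    have hM₂min : IsMinEvDomSet G M₂ :=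
      ⟨hM₂ev, fun M'' h'' => le_trans hM₂le (hmin.2 M'' h'')⟩
    have : M₂ = M := huniq M₂ hM₂min
    have hfM₂ : s(v, b) ∈ M₂ := this ▸ hf
    rcases hfM₂ with h | ⟨-, h⟩
    · exact hf'f h.symm
    · exact h rfl
  · -- b has no neighbor other than v : M \ {f} is still ev-dominating
    push_neg at hw
    set M₃ : Set (Sym2 V) := M \ {s(v, b)} with hM₃
    have hcov : ∀ x, ∃ e' ∈ M₃, EvDom G e' x := by
      intro x
      obtain ⟨e'', he'', hcov''⟩ := hmin.1.2 x
      by_cases h : e'' = s(v, b)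
      · subst h
        refine ⟨s(v, a), ⟨he, hef⟩, ?_⟩
        rcases hcov'' with hx | ⟨u, hu, hux⟩
        · rcases Sym2.mem_iff.mp hx with h' | h'
          · exact Or.inl (by rw [h']; exact Sym2.mem_mk_left _ _)
          · exact Or.inr ⟨v, Sym2.mem_mk_left _ _, by rw [h']; exact hvb⟩
        · rcases Sym2.mem_iff.mp hu with h' | h'
          · exact Or.inr ⟨v, Sym2.mem_mk_left _ _, by rw [← h']; exact hux⟩
          · have hx' : x = v := hw x (by rw [← h']; exact hux)
            exact Or.inl (by rw [hx']; exact Sym2.mem_mk_left _ _)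
      · exact ⟨e'', ⟨he'', h⟩, hcov''⟩
    have hM₃ev : IsEvDomSet G M₃ := ⟨fun g hg => hmin.1.1 hg.1, hcov⟩
    have hlt : M₃.ncard < M.ncard := Set.ncard_diff_singleton_lt_of_mem hf (Set.toFinite _)
    exact absurd (hmin.2 M₃ hM₃ev) (by omega)

lemma pm_noshared {G : SimpleGraph V} {D : Set V} {M : Set (Sym2 V)}
    (h : IsPMOn G D M) : NoSharedVertex M := by
  intro e he f hf hef v hve hvf
  have hvD : v ∈ D := h.2.1 e he v hve
  obtain ⟨g, -, hg⟩ := h.2.2 v hvD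
  exact hef ((hg e ⟨he, hve⟩).trans (hg f ⟨hf, hvf⟩).symm)

lemma pm_edgeVerts {G : SimpleGraph V} {D : Set V} {M : Set (Sym2 V)}
    (h : IsPMOn G D M) : edgeVerts M = D := by
  ext v
  constructor
  · rintro ⟨e, he, hv⟩
    exact h.2.1 e he v hv
  · intro hv
    obtain ⟨e, ⟨he, hve⟩, -⟩ := h.2.2 v hv
    exact ⟨e, he, hve⟩

lemma pm_evdom {G : SimpleGraph V} {D : Set V} {M : Set (Sym2 V)}
    (hD : IsDomSet G D) (h : IsPMOn G D M) : IsEvDomSet G M := by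
  refine ⟨h.1, fun v => ?_⟩
  by_cases hv : v ∈ D
  · obtain ⟨e, ⟨he, hve⟩, -⟩ := h.2.2 v hv
    exact ⟨e, he, Or.inl hve⟩
  · obtain ⟨u, hu, huv⟩ := hD v hv
    obtain ⟨e, ⟨he, hue⟩, -⟩ := h.2.2 u hu
    exact ⟨e, he, Or.inr ⟨u, hue, huv⟩⟩

theorem stmt4 [Fintype V] (G : SimpleGraph V)
    (h : ∃! M : Set (Sym2 V), IsMinEvDomSet G M) :
    ∃! D : Set V, IsMinPairedDomSet G D := by
  obtain ⟨M, hmin, huniq⟩ := h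
  have hns : NoSharedVertex M := matching_of_unique hmin huniq
  set D : Set V := edgeVerts M with hD
  -- D is a paired dominating set with matching M
  have hPM : IsPMOn G D M := by
    refine ⟨hmin.1.1, fun e he v hv => ⟨e, he, hv⟩, fun v hv => ?_⟩
    obtain ⟨e, he, hve⟩ := hv
    refine ⟨e, ⟨he, hve⟩, ?_⟩
    rintro f ⟨hf, hvf⟩
    by_contra hne
    exact hns f hf e he hne v hvf hve
  have hDpd : IsPairedDomSet G D := by
    refine ⟨fun v hv => ?_, M, hPM⟩
    obtain ⟨e, he, hcov⟩ := hmin.1.2 v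
    rcases hcov with hve | ⟨u, hue, huv⟩
    · exact absurd ⟨e, he, hve⟩ hv
    · exact ⟨u, ⟨e, he, hue⟩, huv⟩
  have hDcard : D.ncard = 2 * M.ncard := ncard_edgeVerts hmin.1.1 hns
  -- for any paired dominating set D', D.ncard ≤ D'.ncard
  have hmain : ∀ D' : Set V, IsPairedDomSet G D' →
      D.ncard ≤ D'.ncard ∧ (D'.ncard ≤ D.ncard → D' = D) := by
    intro D' ⟨hdom', M', hPM'⟩
    have hns' : NoSharedVertex M' := pm_noshared hPM'
    have hev' : IsEvDomSet G M' := pm_evdom hdom' hPM'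
    have hD'card : D'.ncard = 2 * M'.ncard := by
      rw [← pm_edgeVerts hPM']
      exact ncard_edgeVerts hPM'.1 hns'
    have hle : M.ncard ≤ M'.ncard := hmin.2 M' hev'
    refine ⟨by omega, fun hcard => ?_⟩
    have hM'min : IsMinEvDomSet G M' :=
      ⟨hev', fun M'' h'' => le_trans (by omega) (hmin.2 M'' h'')⟩
    have : M' = M := huniq M' hM'min
    rw [← pm_edgeVerts hPM', this]
  refine ⟨D, ⟨hDpd, fun D' hD' => (hmain D' hD').1⟩, ?_⟩
  rintro D' ⟨hD'pd, hD'min⟩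
  exact (hmain D' hD'pd).2 (hD'min D hDpd)
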